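/- arXiv:math/0503120 — 2 statements merged into one kernel-verified Lean document; each statement's English description precedes it below -/
import Mathlib

section
/- Let 0 < q < 1, let ν be a positive integer, let z ∈ J_q and let α ∈ ℂ with Re(α) > 0. Then the function t ↦ t^α·F_q^{+,ν}(t,z) (with t^α := exp(α·log t) for real t > 0) is integrable on the interval (0, ∞). -/
open Complex MeasureTheory

/-- `q^w := exp(w · log q)` with the real logarithm of `q`. -/
noncomputable def qpow (q : ℝ) (w : ℂ) : ℂ := Complex.exp (w * Real.log q)

/-- `[w]_q := (1 - q^w)/(1 - q)`. -/
noncomputable def qbr (q : ℝ) (w : ℂ) : ℂ := (1 - qpow q w) / (1 - (q : ℂ))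

/-- the `n`-th term of the series defining `F_q^{+,ν}(t,z)`. -/
noncomputable def FpTerm (q : ℝ) (ν : ℕ) (t z : ℂ) (n : ℕ) : ℂ :=
  qpow q (-(ν : ℂ) * ((n : ℂ) + z)) *
    Complex.exp (-t * qpow q (-((n : ℂ) + z)) * qbr q ((n : ℂ) + z))

/-- `F_q^{+,ν}(t,z)`. -/
noncomputable def Fp (q : ℝ) (ν : ℕ) (t z : ℂ) : ℂ := t ^ ν * ∑' n : ℕ, FpTerm q ν t z n

lemma my_integrable_tsum {α : Type*} [MeasurableSpace α] {μ : Measure α} {F : ℕ → α → ℂ}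
    (hF_int : ∀ i, Integrable (F i) μ) (hF_sum : Summable fun i ↦ ∫ a, ‖F i a‖ ∂μ) :
    Integrable (fun a => ∑' i, F i a) μ := by
  have hmeas : ∀ i, AEStronglyMeasurable (F i) μ := fun i => (hF_int i).1
  have hlint : ∀ i, ∫⁻ a, ‖F i a‖₊ ∂μ = ENNReal.ofReal (∫ a, ‖F i a‖ ∂μ) := fun i =>
    (ofReal_integral_norm_eq_lintegral_enorm (hF_int i)).symm
  have hne : ∑' i, ∫⁻ a, ‖F i a‖₊ ∂μ ≠ ⊤ := by
    simp_rw [hlint]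
    rw [← ENNReal.ofReal_tsum_of_nonneg (fun i => integral_nonneg (fun a => norm_nonneg _)) hF_sum]
    exact ENNReal.ofReal_ne_top
  have hmeas' : ∀ i, AEMeasurable (fun x => (‖F i x‖₊ : ENNReal)) μ := fun i => AEStronglyMeasurable.enorm (hmeas i)
  have hsum_ae : ∀ᵐ a ∂μ, Summable fun n => (‖F n a‖₊ : ℝ) := by
    have h1 : ∫⁻ a, ∑' n, (‖F n a‖₊ : ENNReal) ∂μ ≠ ⊤ := by
      rwa [lintegral_tsum hmeas']
    refine (ae_lt_top' (AEMeasurable.ennreal_tsum hmeas') h1).mono fun x hx => ?_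
    rw [← ENNReal.tsum_coe_ne_top_iff_summable_coe]
    exact hx.ne
  have hsum_ae' : ∀ᵐ a ∂μ, Summable fun n => F n a := by
    filter_upwards [hsum_ae] with a ha
    simp only [coe_nnnorm] at ha
    exact ha.of_norm
  constructor
  · refine aestronglyMeasurable_of_tendsto_ae Filter.atTop
      (fun N => Finset.aestronglyMeasurable_sum (Finset.range N) fun i _ => hmeas i) ?_
    filter_upwards [hsum_ae'] with a ha
    simpa only [Finset.sum_apply] using ha.hasSum.tendsto_sum_nat
  · unfold HasFiniteIntegral
    calc ∫⁻ a, ‖∑' i, F i a‖₊ ∂μ ≤ ∫⁻ a, ∑' i, (‖F i a‖₊ : ENNReal) ∂μ := by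
          refine lintegral_mono_ae ?_
          filter_upwards [hsum_ae] with a ha
          have := nnnorm_tsum_le (NNReal.summable_coe.mp ha)
          exact_mod_cast ENNReal.coe_le_coe.mpr this |>.trans_eq
            (ENNReal.coe_tsum (NNReal.summable_coe.mp ha))
      _ < ⊤ := by rwa [lintegral_tsum hmeas', lt_top_iff_ne_top]

lemma qpow_mul_qbr (q : ℝ) (hq : q ≠ 1) (w : ℂ) :
    qpow q (-w) * qbr q w = (qpow q (-w) - 1) / (1 - (q : ℂ)) := by
  have h1 : qpow q (-w) * qpow q w = 1 := by
    rw [qpow, qpow, ← Complex.exp_add, ← add_mul, neg_add_cancel, zero_mul, Complex.exp_zero]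
  have hq' : (1 : ℂ) - q ≠ 0 := by
    intro h
    apply hq
    have : (q : ℂ) = 1 := by linear_combination -h
    exact_mod_cast this
  rw [qbr, ← mul_div_assoc, mul_sub, h1, mul_one]

lemma norm_FpTerm (q : ℝ) (hq1 : q < 1) (ν : ℕ) (z : ℂ) (n : ℕ) (t : ℝ) :
    ‖FpTerm q ν (t : ℂ) z n‖ =
      Real.exp (-(ν:ℝ) * ((n:ℝ) + z.re) * Real.log q) *
        Real.exp (-((Real.exp (-((n:ℝ) + z.re) * Real.log q) * Real.cos (z.im * Real.log q) - 1)
          / (1 - q) * t)) := by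
  have hqne : q ≠ 1 := ne_of_lt hq1
  rw [FpTerm, mul_assoc (-(t:ℂ)), qpow_mul_qbr q hqne, norm_mul, qpow,
    Complex.norm_exp, Complex.norm_exp]
  congr 1
  · rw [Real.exp_eq_exp]
    simp [Complex.mul_re, Complex.mul_im]
  · rw [Real.exp_eq_exp]
    rw [show (-(t:ℂ) * ((qpow q (-(↑n + z)) - 1) / (1 - (q:ℂ)))) = ((-(t:ℂ) * (qpow q (-(↑n+z)) - 1)) / ((1 - q : ℝ) : ℂ)) by push_cast; ring]
    rw [Complex.div_ofReal_re]
    simp only [Complex.mul_re, Complex.ofReal_re, Complex.ofReal_im, Complex.neg_re, Complex.neg_im,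
      Complex.sub_re, Complex.one_re, qpow, Complex.exp_re]
    simp [Complex.mul_re, Complex.mul_im]
    ring

theorem stmt5 (q : ℝ) (hq0 : 0 < q) (hq1 : q < 1) (ν : ℕ) (hν : 0 < ν)
    (z : ℂ) (hz : |z.im| < Real.pi / (2 * |Real.log q|))
    (hz' : 0 < z.re ∧ 1 < q ^ (-z.re) * Real.cos (z.im * Real.log q))
    (α : ℂ) (hα : 0 < α.re) :
    IntegrableOn (fun t : ℝ => Complex.exp (α * Real.log t) * Fp q ν (t : ℂ) z)
      (Set.Ioi (0 : ℝ)) := by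
  obtain ⟨hxpos, hκ'⟩ := hz'
  set L := Real.log q with hLdef
  have hL : L < 0 := Real.log_neg hq0 hq1
  have hq1' : 0 < 1 - q := by linarith
  set κ : ℝ := Real.exp (-z.re * L) * Real.cos (z.im * L) with hκdef
  have hκ : 1 < κ := by
    rwa [Real.rpow_def_of_pos hq0, mul_comm L] at hκ'
  set c : ℝ := (κ - 1) / (1 - q) with hcdef
  have hc : 0 < c := div_pos (by linarith) hq1'
  set B : ℕ → ℝ := fun n =>
    (Real.exp (-((n:ℝ) + z.re) * L) * Real.cos (z.im * L) - 1) / (1 - q) with hBdef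
  have hBk : ∀ n : ℕ, B n = (Real.exp (-(n:ℝ) * L) * κ - 1) / (1 - q) := by
    intro n
    show (Real.exp (-((n:ℝ) + z.re) * L) * Real.cos (z.im * L) - 1) / (1 - q) = _
    rw [hκdef, show -((n:ℝ) + z.re) * L = -(n:ℝ) * L + -z.re * L by ring, Real.exp_add]
    ring_nf
  have hexp1 : ∀ n : ℕ, 1 ≤ Real.exp (-(n:ℝ) * L) := fun n =>
    Real.one_le_exp (by nlinarith [Nat.cast_nonneg (α := ℝ) n])
  have hB1 : ∀ n : ℕ, Real.exp (-(n:ℝ) * L) * c ≤ B n := by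
    intro n
    rw [hBk n, hcdef, ← mul_div_assoc]
    gcongr
    nlinarith [hexp1 n]
  have hBpos : ∀ n : ℕ, 0 < B n := fun n =>
    lt_of_lt_of_le (mul_pos (Real.exp_pos _) hc) (hB1 n)
  set a : ℝ := α.re + ν with hadef
  have ha : 0 < a := by positivity
  set D : ℕ → ℝ := fun n => Real.exp (-(ν:ℝ) * ((n:ℝ) + z.re) * L) with hDdef
  set F : ℕ → ℝ → ℂ := fun n t =>
    Complex.exp (α * Real.log t) * (((t:ℝ):ℂ) ^ ν * FpTerm q ν (t:ℝ) z n) with hFdef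
  set G : ℕ → ℝ → ℝ := fun n t => D n * (t ^ a * Real.exp (-(B n * t))) with hGdef
  have hnorm : ∀ n : ℕ, ∀ t ∈ Set.Ioi (0:ℝ), ‖F n t‖ = G n t := by
    intro n t ht
    rw [Set.mem_Ioi] at ht
    show ‖Complex.exp (α * Real.log t) * (((t:ℝ):ℂ) ^ ν * FpTerm q ν (t:ℝ) z n)‖ = _
    rw [norm_mul, norm_mul, norm_pow, Complex.norm_exp,
      norm_FpTerm q hq1 ν z n t]
    have h1 : (α * (Real.log t : ℂ)).re = α.re * Real.log t := by
      simp [Complex.mul_re]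
    rw [h1, show Real.exp (α.re * Real.log t) = t ^ α.re by
      rw [Real.rpow_def_of_pos ht, mul_comm]]
    have h2 : ‖((t:ℝ):ℂ)‖ = t := by
      rw [Complex.norm_real, Real.norm_of_nonneg ht.le]
    rw [h2, show t ^ ν = t ^ ((ν:ℕ):ℝ) by rw [Real.rpow_natCast]]
    rw [hGdef, hDdef]
    show _ = Real.exp (-(ν:ℝ) * ((n:ℝ) + z.re) * L) * (t ^ a * Real.exp (-(B n * t)))
    rw [hadef, Real.rpow_add ht, ← hLdef]
    have h3 : (Real.exp (-((n:ℝ) + z.re) * L) * Real.cos (z.im * L) - 1) / (1 - q) = B n := rfl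
    rw [h3]
    ring
  have hGint : ∀ n : ℕ, IntegrableOn (G n) (Set.Ioi 0) := by
    intro n
    have h := integrableOn_rpow_mul_exp_neg_mul_rpow (s := a) (p := 1) (b := B n)
      (by linarith) zero_lt_one (hBpos n)
    simp only [Real.rpow_one, neg_mul] at h
    exact h.const_mul (D n)
  have hFmeas : ∀ n : ℕ, AEStronglyMeasurable (F n) (volume.restrict (Set.Ioi 0)) := by
    intro n
    apply Measurable.aestronglyMeasurable
    have hlog : Measurable fun t : ℝ => Complex.exp (α * (Real.log t : ℂ)) :=
      Complex.measurable_exp.comp ((Complex.measurable_ofReal.comp Real.measurable_log).const_mul α)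
    have hpow : Measurable fun t : ℝ => ((t:ℝ):ℂ) ^ ν := Complex.measurable_ofReal.pow_const ν
    have hterm : Measurable fun t : ℝ => FpTerm q ν (t:ℝ) z n := by
      unfold FpTerm
      exact measurable_const.mul (Complex.measurable_exp.comp
        ((Complex.measurable_ofReal.neg.mul_const _).mul_const _))
    exact hlog.mul (hpow.mul hterm)
  have hFint : ∀ n : ℕ, Integrable (F n) (volume.restrict (Set.Ioi 0)) := by
    intro n
    refine Integrable.mono' (hGint n) (hFmeas n) ?_
    rw [ae_restrict_iff' measurableSet_Ioi]
    exact Filter.Eventually.of_forall fun t ht => le_of_eq (hnorm n t ht)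
  have hΓpos : 0 < Real.Gamma (a + 1) := Real.Gamma_pos_of_pos (by linarith)
  have hval : ∀ n : ℕ, ∫ t in Set.Ioi 0, ‖F n t‖ =
      D n * ((1 / B n) ^ (a + 1) * Real.Gamma (a + 1)) := by
    intro n
    rw [setIntegral_congr_fun measurableSet_Ioi (hnorm n), hGdef]
    show ∫ t in Set.Ioi 0, D n * (t ^ a * Real.exp (-(B n * t))) = _
    rw [MeasureTheory.integral_const_mul]
    congr 1
    have h := Real.integral_rpow_mul_exp_neg_mul_Ioi (a := a + 1) (r := B n)
      (by linarith) (hBpos n)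
    simpa using h
  have hsum : Summable fun n : ℕ => ∫ t in Set.Ioi 0, ‖F n t‖ := by
    set ρ : ℝ := Real.exp ((α.re + 1) * L) with hρdef
    have hρ0 : 0 ≤ ρ := (Real.exp_pos _).le
    have hρ1 : ρ < 1 := by
      rw [hρdef, Real.exp_lt_one_iff]
      exact mul_neg_of_pos_of_neg (by linarith) hL
    have hgeo : Summable (fun n : ℕ =>
        (Real.exp (-(ν:ℝ) * z.re * L) * ((1 / c) ^ (a + 1) * Real.Gamma (a + 1))) * ρ ^ n) :=
      (summable_geometric_of_lt_one hρ0 hρ1).mul_left _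
    refine Summable.of_nonneg_of_le
      (fun n => integral_nonneg fun t => norm_nonneg _) (fun n => ?_) hgeo
    rw [hval n]
    have hBle : (1 / B n) ≤ Real.exp ((n:ℝ) * L) * (1 / c) := by
      rw [show Real.exp ((n:ℝ) * L) * (1 / c) = 1 / (Real.exp (-(n:ℝ) * L) * c) by
        rw [one_div, one_div, mul_inv, ← Real.exp_neg, neg_mul, neg_neg]]
      exact one_div_le_one_div_of_le (mul_pos (Real.exp_pos _) hc) (hB1 n)
    calc D n * ((1 / B n) ^ (a + 1) * Real.Gamma (a + 1))
        ≤ D n * ((Real.exp ((n:ℝ) * L) * (1 / c)) ^ (a + 1) * Real.Gamma (a + 1)) := by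
          gcongr
          · exact one_div_nonneg.mpr (hBpos n).le
      _ = (Real.exp (-(ν:ℝ) * z.re * L) * ((1 / c) ^ (a + 1) * Real.Gamma (a + 1))) * ρ ^ n := by
          rw [Real.mul_rpow (Real.exp_pos _).le (one_div_nonneg.mpr hc.le),
            ← Real.exp_mul, hρdef, ← Real.exp_nat_mul, hDdef]
          show Real.exp (-(ν:ℝ) * ((n:ℝ) + z.re) * L) *
              (Real.exp ((n:ℝ) * L * (a + 1)) * (1/c) ^ (a+1) * Real.Gamma (a+1)) = _
          rw [show Real.exp (-(ν:ℝ) * ((n:ℝ) + z.re) * L) *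
              (Real.exp ((n:ℝ) * L * (a + 1)) * (1/c) ^ (a+1) * Real.Gamma (a+1))
              = (Real.exp (-(ν:ℝ) * ((n:ℝ) + z.re) * L) * Real.exp ((n:ℝ) * L * (a+1)))
                * ((1/c) ^ (a+1) * Real.Gamma (a+1)) by ring,
            show Real.exp (-(ν:ℝ) * z.re * L) * ((1/c) ^ (a+1) * Real.Gamma (a+1)) *
              Real.exp ((n:ℝ) * ((α.re + 1) * L))
              = (Real.exp (-(ν:ℝ) * z.re * L) * Real.exp ((n:ℝ) * ((α.re + 1) * L)))
                * ((1/c) ^ (a+1) * Real.Gamma (a+1)) by ring,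
            ← Real.exp_add, ← Real.exp_add]
          congr 1
          rw [hadef]
          ring
  have hkey := my_integrable_tsum hFint hsum
  refine hkey.congr (Filter.Eventually.of_forall fun t => ?_)
  show ∑' n, F n t = Complex.exp (α * Real.log t) * Fp q ν (t:ℝ) z
  rw [Fp, hFdef]
  show ∑' n, Complex.exp (α * Real.log t) * (((t:ℝ):ℂ) ^ ν * FpTerm q ν (t:ℝ) z n) = _
  rw [tsum_mul_left, tsum_mul_left]
end

section
/- Let 0 < q < 1, let ν be a positive integer and let z ∈ ℂ. Then the function G_q^{(ν)}(t,z) := −((1−q)^ν/log q)·(ν−1)!·e^{t/(1−q)} − F_q^{−,ν}(t,z) satisfies G_q^{(ν)}(0,z) = −((1−q)^ν/log q)·(ν−1)! and, for every t ∈ ℂ, G_q^{(ν)}(q·t,z) = e^{−t}·( G_q^{(ν)}(t,z) + t^ν·q^{ν(1−z)}·e^{t·[1−z]_q} ). -/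
open Complex

/-- the term of index `n+1` of the series defining `F_q^{-,ν}(t,z)`. -/
noncomputable def FmTerm (q : ℝ) (ν : ℕ) (t z : ℂ) (n : ℕ) : ℂ :=
  qpow q ((ν : ℂ) * (((n : ℂ) + 1) - z)) * Complex.exp (t * qbr q (((n : ℂ) + 1) - z))

/-- `F_q^{-,ν}(t,z)`. -/
noncomputable def Fm (q : ℝ) (ν : ℕ) (t z : ℂ) : ℂ := t ^ ν * ∑' n : ℕ, FmTerm q ν t z n

/-- `G_q^{(ν)}(t,z) := −((1−q)^ν/log q)·(ν−1)!·e^{t/(1−q)} − F_q^{−,ν}(t,z)`. -/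
noncomputable def Gq (q : ℝ) (ν : ℕ) (t z : ℂ) : ℂ :=
  -((((1 - q) ^ ν : ℝ) : ℂ) / (Real.log q : ℂ)) * (Nat.factorial (ν - 1) : ℂ) *
    Complex.exp (t / (1 - (q : ℂ))) - Fm q ν t z

lemma qpow_add (q : ℝ) (a b : ℂ) : qpow q (a + b) = qpow q a * qpow q b := by
  unfold qpow; rw [add_mul, Complex.exp_add]

lemma qpow_natCast (q : ℝ) (hq0 : 0 < q) (n : ℕ) : qpow q (n : ℂ) = ((q : ℂ)) ^ n := by
  unfold qpow
  rw [Complex.exp_nat_mul, ← Complex.ofReal_exp, Real.exp_log hq0]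

lemma qpow_one (q : ℝ) (hq0 : 0 < q) : qpow q 1 = (q : ℂ) := by
  simpa using qpow_natCast q hq0 1

lemma norm_qpow_le (q : ℝ) (hq0 : 0 < q) (hq1 : q < 1) (w : ℂ) (n : ℕ) :
    ‖qpow q ((n : ℂ) + w)‖ ≤ ‖qpow q w‖ := by
  rw [qpow_add, norm_mul, qpow_natCast q hq0]
  have h1 : ‖((q : ℂ)) ^ n‖ ≤ 1 := by
    rw [norm_pow, Complex.norm_real, Real.norm_of_nonneg hq0.le]
    exact pow_le_one₀ hq0.le hq1.le
  nlinarith [norm_nonneg (qpow q w), norm_nonneg (((q : ℂ)) ^ n)]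

lemma qbr_succ (q : ℝ) (hq0 : 0 < q) (hq1 : q < 1) (w : ℂ) :
    (q : ℂ) * qbr q w = qbr q (w + 1) - 1 := by
  have hne : (1 : ℂ) - (q : ℂ) ≠ 0 := by
    intro h
    have : (q : ℂ) = 1 := by linear_combination -h
    exact absurd (by exact_mod_cast this) hq1.ne
  unfold qbr
  rw [qpow_add, qpow_one q hq0]
  field_simp
  ring

lemma FmTerm_summable (q : ℝ) (hq0 : 0 < q) (hq1 : q < 1) (ν : ℕ) (hν : 0 < ν) (t z : ℂ) :
    Summable (FmTerm q ν t z) := by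
  set B : ℝ := ‖t‖ * ((1 + ‖qpow q (1 - z)‖) / (1 - q)) with hB
  set C : ℝ := ‖qpow q ((ν : ℂ) * (1 - z))‖ * Real.exp B with hC
  have hqν : (0:ℝ) ≤ q ^ ν := pow_nonneg hq0.le ν
  have hqν1 : q ^ ν < 1 := pow_lt_one₀ hq0.le hq1 hν.ne'
  apply Summable.of_norm_bounded (g := fun n => C * (q ^ ν) ^ n)
    ((summable_geometric_of_lt_one hqν hqν1).mul_left C)
  intro n
  have hsplit : (ν : ℂ) * (((n : ℂ) + 1) - z) = (((ν * n : ℕ) : ℂ)) + (ν : ℂ) * (1 - z) := by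
    push_cast; ring
  have hq1' : ‖qpow q ((ν : ℂ) * (((n : ℂ) + 1) - z))‖
      = (q ^ ν) ^ n * ‖qpow q ((ν : ℂ) * (1 - z))‖ := by
    rw [hsplit, qpow_add, norm_mul, qpow_natCast q hq0, norm_pow, Complex.norm_real,
      Real.norm_of_nonneg hq0.le, pow_mul]
  have hexp : ‖Complex.exp (t * qbr q (((n : ℂ) + 1) - z))‖ ≤ Real.exp B := by
    rw [Complex.norm_exp]
    apply Real.exp_le_exp.2
    calc (t * qbr q (((n : ℂ) + 1) - z)).re ≤ ‖t * qbr q (((n : ℂ) + 1) - z)‖ :=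
          by exact Complex.re_le_norm _
      _ = ‖t‖ * ‖qbr q (((n : ℂ) + 1) - z)‖ := norm_mul _ _
      _ ≤ B := by
          rw [hB]
          apply mul_le_mul_of_nonneg_left _ (norm_nonneg t)
          unfold qbr
          rw [norm_div]
          have hden : ‖(1 : ℂ) - (q : ℂ)‖ = 1 - q := by
            rw [show (1 : ℂ) - (q : ℂ) = ((1 - q : ℝ) : ℂ) by push_cast; ring,
              Complex.norm_real, Real.norm_of_nonneg (by linarith)]
          rw [hden]
          apply div_le_div_of_nonneg_right _ (by linarith)
          calc ‖1 - qpow q (((n : ℂ) + 1) - z)‖ ≤ ‖(1:ℂ)‖ + ‖qpow q (((n : ℂ) + 1) - z)‖ :=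
                norm_sub_le _ _
            _ ≤ 1 + ‖qpow q (1 - z)‖ := by
                rw [norm_one]
                have := norm_qpow_le q hq0 hq1 (1 - z) n
                rw [show ((n : ℂ)) + (1 - z) = ((n : ℂ) + 1) - z by ring] at this
                linarith
  unfold FmTerm
  rw [norm_mul, hq1']
  calc (q ^ ν) ^ n * ‖qpow q ((ν : ℂ) * (1 - z))‖ * ‖Complex.exp (t * qbr q (((n : ℂ) + 1) - z))‖
      ≤ (q ^ ν) ^ n * ‖qpow q ((ν : ℂ) * (1 - z))‖ * Real.exp B := by
        apply mul_le_mul_of_nonneg_left hexp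
        positivity
    _ = C * (q ^ ν) ^ n := by rw [hC]; ring

lemma FmTerm_shift (q : ℝ) (hq0 : 0 < q) (hq1 : q < 1) (ν : ℕ) (t z : ℂ) (n : ℕ) :
    (q : ℂ) ^ ν * FmTerm q ν ((q : ℂ) * t) z n = Complex.exp (-t) * FmTerm q ν t z (n + 1) := by
  unfold FmTerm
  have h1 : (ν : ℂ) * ((((n : ℕ) + 1 : ℕ) : ℂ) + 1 - z)
      = (ν : ℂ) * (((n : ℂ) + 1) - z) + (ν : ℂ) := by push_cast; ring
  have h2 : ((((n : ℕ) + 1 : ℕ) : ℂ) + 1 - z) = (((n : ℂ) + 1) - z) + 1 := by push_cast; ring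
  rw [h1, h2, qpow_add, qpow_natCast q hq0]
  have h3 : t * qbr q ((((n : ℂ) + 1) - z) + 1) = (q : ℂ) * t * qbr q (((n : ℂ) + 1) - z) + t := by
    have := qbr_succ q hq0 hq1 (((n : ℂ) + 1) - z)
    linear_combination (-t) * this
  rw [h3, Complex.exp_add]
  have key : Complex.exp (-t) * Complex.exp t = 1 := by
    rw [← Complex.exp_add]; simp
  linear_combination (-(qpow q ((ν : ℂ) * (((n : ℂ) + 1) - z)) * (q : ℂ) ^ ν *
    Complex.exp ((q : ℂ) * t * qbr q (((n : ℂ) + 1) - z)))) * key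

theorem stmt10 (q : ℝ) (hq0 : 0 < q) (hq1 : q < 1) (ν : ℕ) (hν : 0 < ν) (z : ℂ) :
    Gq q ν 0 z = -((((1 - q) ^ ν : ℝ) : ℂ) / (Real.log q : ℂ)) * (Nat.factorial (ν - 1) : ℂ) ∧
    ∀ t : ℂ, Gq q ν ((q : ℂ) * t) z =
      Complex.exp (-t) *
        (Gq q ν t z + t ^ ν * qpow q ((ν : ℂ) * (1 - z)) * Complex.exp (t * qbr q (1 - z))) := by
  have hne : (1 : ℂ) - (q : ℂ) ≠ 0 := by
    intro h
    have : (q : ℂ) = 1 := by linear_combination -h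
    exact absurd (by exact_mod_cast this) hq1.ne
  constructor
  · simp [Gq, Fm, zero_pow hν.ne', zero_div, Complex.exp_zero]
  · intro t
    have hsum := FmTerm_summable q hq0 hq1 ν hν t z
    have hshift : ∑' n : ℕ, FmTerm q ν t z (n + 1)
        = (∑' n : ℕ, FmTerm q ν t z n) - FmTerm q ν t z 0 := by
      have h := Summable.tsum_eq_zero_add hsum
      rw [h]; ring
    have hF : Fm q ν ((q : ℂ) * t) z
        = Complex.exp (-t) * (Fm q ν t z - t ^ ν * FmTerm q ν t z 0) := by
      unfold Fm
      have : ((q : ℂ) * t) ^ ν * ∑' n : ℕ, FmTerm q ν ((q : ℂ) * t) z n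
          = t ^ ν * ∑' n : ℕ, (q : ℂ) ^ ν * FmTerm q ν ((q : ℂ) * t) z n := by
        rw [tsum_mul_left, mul_pow]; ring
      rw [this]
      have h2 : ∑' n : ℕ, (q : ℂ) ^ ν * FmTerm q ν ((q : ℂ) * t) z n
          = ∑' n : ℕ, Complex.exp (-t) * FmTerm q ν t z (n + 1) := by
        exact tsum_congr fun n => FmTerm_shift q hq0 hq1 ν t z n
      rw [h2, tsum_mul_left, hshift]
      ring
    have hterm0 : FmTerm q ν t z 0 = qpow q ((ν : ℂ) * (1 - z)) * Complex.exp (t * qbr q (1 - z)) := by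
      unfold FmTerm
      norm_num
    have hexp : Complex.exp ((q : ℂ) * t / (1 - (q : ℂ)))
        = Complex.exp (-t) * Complex.exp (t / (1 - (q : ℂ))) := by
      rw [← Complex.exp_add]
      congr 1
      field_simp
      ring
    unfold Gq
    rw [hF, hexp, hterm0]
    ring
end
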